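/- Let x = a_1 e_1 + ⋯ + a_n e_n + a c be in normal form with a ≥ 0. Then: (1) S_x = (∏_{i=1}^n x_i^{a_i})·S_{ac}, i.e., S_x is the image of S_{ac} under multiplication by the monomial ∏_{i=1}^n x_i^{a_i}, and S_{x+mc} = S_x · S_{mc} for every integer m ≥ 0; (2) S_{ac} is an (a+1)-dimensional ℂ-vector space, with basis the images of the monomials t_0^ℓ t_1^{a−ℓ} for 0 ≤ ℓ ≤ a. -/

import Mathlib

noncomputable section

open MvPolynomial

def LRel (ι : Type) [DecidableEq ι] (p : ι → ℕ) : AddSubgroup (Option ι → ℤ) :=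
  AddSubgroup.closure
    { v | ∃ i : ι, v = (p i : ℤ) • Pi.single (some i) 1 - Pi.single (none : Option ι) 1 }

abbrev LGroup (ι : Type) [DecidableEq ι] (p : ι → ℕ) : Type :=
  (Option ι → ℤ) ⧸ LRel ι p

def egen {ι : Type} [DecidableEq ι] (p : ι → ℕ) (i : ι) : LGroup ι p :=
  QuotientAddGroup.mk (Pi.single (some i) 1)

def cgen {ι : Type} [DecidableEq ι] (p : ι → ℕ) : LGroup ι p :=
  QuotientAddGroup.mk (Pi.single (none : Option ι) 1)

def Lplus {ι : Type} [DecidableEq ι] (p : ι → ℕ) : AddSubmonoid (LGroup ι p) :=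
  AddSubmonoid.closure (Set.range (egen p))

abbrev SPoly (ι : Type) : Type := MvPolynomial (ι ⊕ Fin 2) ℂ

def SIdl (ι : Type) (p : ι → ℕ) (c0 c1 : ι → ℂ) : Ideal (SPoly ι) :=
  Ideal.span { f | ∃ i : ι,
    f = X (Sum.inl i) ^ (p i) - (C (c0 i) * X (Sum.inr 0) + C (c1 i) * X (Sum.inr 1)) }

abbrev SAlg (ι : Type) (p : ι → ℕ) (c0 c1 : ι → ℂ) : Type := SPoly ι ⧸ SIdl ι p c0 c1

def wtA {ι : Type} [Fintype ι] [DecidableEq ι] (p : ι → ℕ) (m : (ι ⊕ Fin 2) →₀ ℕ) :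
    LGroup ι p :=
  (∑ i : ι, m (Sum.inl i) • egen p i) + (m (Sum.inr 0) + m (Sum.inr 1)) • cgen p

def polyCompA {ι : Type} [Fintype ι] [DecidableEq ι] (p : ι → ℕ) (y : LGroup ι p) :
    Submodule ℂ (SPoly ι) where
  carrier := { f | ∀ m, coeff m f ≠ 0 → wtA p m = y }
  add_mem' := by
    intro f g hf hg m hm
    by_cases h : coeff m f = 0
    · refine hg m fun h' => hm ?_
      simp [coeff_add, h, h']
    · exact hf m h
  zero_mem' := by
    intro m hm
    simp at hm
  smul_mem' := by
    intro c f hf m hm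
    refine hf m fun h => hm ?_
    simp [coeff_smul, h]

def SCompA {ι : Type} [Fintype ι] [DecidableEq ι] (p : ι → ℕ) (c0 c1 : ι → ℂ)
    (y : LGroup ι p) : Submodule ℂ (SAlg ι p c0 c1) :=
  (polyCompA p y).map (Ideal.Quotient.mkₐ ℂ (SIdl ι p c0 c1)).toLinearMap

def SVerA {ι : Type} [Fintype ι] [DecidableEq ι] (p : ι → ℕ) (c0 c1 : ι → ℂ)
    (x : LGroup ι p) : Submodule ℂ (SAlg ι p c0 c1) :=
  ⨆ k : ℤ, SCompA p c0 c1 (k • x)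

def SShiftA {ι : Type} [Fintype ι] [DecidableEq ι] (p : ι → ℕ) (c0 c1 : ι → ℂ)
    (y x : LGroup ι p) : Submodule ℂ (SAlg ι p c0 c1) :=
  ⨆ k : ℤ, SCompA p c0 c1 (y + k • x)

section Dev
variable {ι : Type} [DecidableEq ι] (p : ι → ℕ)

-- the mod-p_i invariant
def modHomPre (i : ι) : (Option ι → ℤ) →+ ZMod (p i) :=
  (Int.castAddHom (ZMod (p i))).comp (Pi.evalAddMonoidHom (fun _ : Option ι => ℤ) (some i))

lemma modHomPre_ker (i : ι) : LRel ι p ≤ (modHomPre p i).ker := by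
  rw [LRel, AddSubgroup.closure_le]
  rintro v ⟨j, rfl⟩
  simp only [SetLike.mem_coe, AddMonoidHom.mem_ker, map_sub, modHomPre, AddMonoidHom.coe_comp,
    Function.comp_apply, Pi.evalAddMonoidHom_apply, Int.coe_castAddHom, map_zsmul]
  by_cases h : j = i
  · subst h
    simp [Pi.single_eq_same, ZMod.natCast_self]
  · rw [Pi.single_eq_of_ne (fun hh => h (Option.some_injective _ hh).symm)]; simp

def modHom (i : ι) : LGroup ι p →+ ZMod (p i) :=
  QuotientAddGroup.lift (LRel ι p) (modHomPre p i) (fun v hv => modHomPre_ker p i hv)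

@[simp] lemma modHom_egen (i j : ι) :
    modHom p i (egen p j) = if j = i then 1 else 0 := by
  by_cases h : j = i
  · subst h; simp [modHom, egen, modHomPre]
  · simp [modHom, egen, modHomPre, h, Pi.single_eq_of_ne (fun hh => h (Option.some_injective _ hh).symm)]

@[simp] lemma modHom_cgen (i : ι) : modHom p i (cgen p) = 0 := by
  simp [modHom, cgen, modHomPre]

variable [Fintype ι]

def degHomPre : (Option ι → ℤ) →+ ℚ :=
  AddMonoidHom.mk' (fun v => (v none : ℚ) + ∑ i : ι, (v (some i) : ℚ) / (p i))
    (by intro v w; simp [Finset.sum_add_distrib, add_div]; ring)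

lemma degHomPre_ker (hp : ∀ i, 2 ≤ p i) : LRel ι p ≤ (degHomPre p).ker := by
  rw [LRel, AddSubgroup.closure_le]
  rintro v ⟨j, rfl⟩
  have hpj : (p j : ℚ) ≠ 0 := by
    have := hp j; positivity
  simp only [SetLike.mem_coe, AddMonoidHom.mem_ker, map_sub, map_zsmul, degHomPre,
    AddMonoidHom.mk'_apply]
  have h1 : (Pi.single (some j) (1:ℤ) : Option ι → ℤ) none = 0 := by
    rw [Pi.single_eq_of_ne]; exact fun h => by cases h
  have h2 : ∀ i : ι, ((Pi.single (some j) (1:ℤ) : Option ι → ℤ) (some i) : ℚ) / (p i)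
      = if i = j then (1:ℚ) / (p j) else 0 := by
    intro i
    by_cases h : i = j
    · subst h; simp [Pi.single_eq_same]
    · rw [Pi.single_eq_of_ne (fun hh => h (Option.some_injective _ hh))]; simp [h]
  simp only [h1, h2, Pi.single_eq_same, Finset.sum_ite_eq', Finset.mem_univ, if_true]
  push_cast
  field_simp
  simp [Pi.single_apply, hpj]

def degHom (hp : ∀ i, 2 ≤ p i) : LGroup ι p →+ ℚ :=
  QuotientAddGroup.lift (LRel ι p) (degHomPre p) (fun _ hv => degHomPre_ker p hp hv)

@[simp] lemma degHom_egen (hp : ∀ i, 2 ≤ p i) (i : ι) :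
    degHom p hp (egen p i) = 1 / (p i) := by
  have h1 : (Pi.single (some i) (1:ℤ) : Option ι → ℤ) none = 0 := by
    rw [Pi.single_eq_of_ne]; exact fun h => by cases h
  have h2 : ∀ j : ι, ((Pi.single (some i) (1:ℤ) : Option ι → ℤ) (some j) : ℚ) / (p j)
      = if j = i then (1:ℚ) / (p i) else 0 := by
    intro j
    by_cases h : j = i
    · subst h; simp [Pi.single_eq_same]
    · rw [Pi.single_eq_of_ne (fun hh => h (Option.some_injective _ hh))]; simp [h]
  simp [degHom, egen, degHomPre, h1, h2]

@[simp] lemma degHom_cgen (hp : ∀ i, 2 ≤ p i) : degHom p hp (cgen p) = 1 := by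
  have h2 : ∀ j : ι, ((Pi.single (none : Option ι) (1:ℤ) : Option ι → ℤ) (some j) : ℚ) / (p j) = 0 := by
    intro j
    rw [Pi.single_eq_of_ne (Option.some_ne_none j)]; simp
  simp [degHom, cgen, degHomPre, h2]

-- relation: p i • egen p i = cgen p
lemma pe_eq_c (i : ι) : (p i) • egen p i = cgen p := by
  have key : (QuotientAddGroup.mk ((p i : ℤ) • (Pi.single (some i) 1 : Option ι → ℤ))
      : LGroup ι p) = cgen p := by
    rw [cgen, QuotientAddGroup.eq]
    have hg : ((p i : ℤ) • Pi.single (some i) 1 - Pi.single (none : Option ι) 1) ∈ LRel ι p :=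
      AddSubgroup.subset_closure ⟨i, rfl⟩
    have := neg_mem hg
    rwa [neg_sub, sub_eq_neg_add] at this
  calc (p i) • egen p i = (p i : ℤ) • egen p i := by rw [natCast_zsmul]
    _ = QuotientAddGroup.mk ((p i : ℤ) • (Pi.single (some i) 1 : Option ι → ℤ)) := by
        rw [egen, QuotientAddGroup.mk_zsmul]
    _ = cgen p := key

open MvPolynomial in
theorem wtA_add (m1 m2 : (ι ⊕ Fin 2) →₀ ℕ) :
    wtA p (m1 + m2) = wtA p m1 + wtA p m2 := by
  simp only [wtA, Finsupp.add_apply, add_smul, Finset.sum_add_distrib]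
  abel

theorem modHom_wtA (i : ι) (m : (ι ⊕ Fin 2) →₀ ℕ) :
    modHom p i (wtA p m) = (m (Sum.inl i) : ZMod (p i)) := by
  simp only [wtA, map_add, map_sum, map_nsmul, modHom_egen, modHom_cgen, smul_zero, add_zero]
  rw [Finset.sum_eq_single i]
  · simp
  · intro j _ hj; simp [hj]
  · intro h; exact absurd (Finset.mem_univ i) h

theorem degHom_wtA (hp : ∀ i, 2 ≤ p i) (m : (ι ⊕ Fin 2) →₀ ℕ) :
    degHom p hp (wtA p m) =
      (∑ i : ι, (m (Sum.inl i) : ℚ) / (p i)) + (m (Sum.inr 0) + m (Sum.inr 1)) := by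
  simp only [wtA, map_add, map_sum, map_nsmul, degHom_egen, degHom_cgen, nsmul_eq_mul,
    mul_one]
  push_cast
  congr 1
  exact Finset.sum_congr rfl (fun i _ => mul_one_div _ _)

theorem wt_classify (hp : ∀ i, 2 ≤ p i) (a : ι → ℕ) (ha : ∀ i, a i < p i) (aN : ℕ)
    (m : (ι ⊕ Fin 2) →₀ ℕ)
    (h : wtA p m = (∑ i, a i • egen p i) + aN • cgen p) :
    (∀ i, m (Sum.inl i) % p i = a i) ∧
      (∑ i : ι, m (Sum.inl i) / p i) + m (Sum.inr 0) + m (Sum.inr 1) = aN := by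
  have hmod : ∀ i, m (Sum.inl i) % p i = a i := by
    intro i
    have := congrArg (modHom p i) h
    rw [modHom_wtA] at this
    simp only [map_add, map_sum, map_nsmul, modHom_egen, modHom_cgen, smul_zero, add_zero] at this
    rw [Finset.sum_eq_single i (fun j _ hj => by simp [hj]) (fun h => absurd (Finset.mem_univ i) h)] at this
    simp only [eq_self_iff_true, if_true, nsmul_eq_mul, mul_one] at this
    have h2 := (ZMod.natCast_eq_natCast_iff _ _ _).1 this
    rwa [Nat.ModEq, Nat.mod_eq_of_lt (ha i)] at h2
  refine ⟨hmod, ?_⟩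
  have hdeg := congrArg (degHom p hp) h
  rw [degHom_wtA] at hdeg
  simp only [map_add, map_sum, map_nsmul, degHom_egen, degHom_cgen, nsmul_eq_mul, mul_one] at hdeg
  simp only [mul_one_div] at hdeg
  -- rewrite m (inl i) = p i * (m (inl i) / p i) + a i
  have hsplit : ∀ i : ι, (m (Sum.inl i) : ℚ) / (p i) = (m (Sum.inl i) / p i : ℕ) + (a i : ℚ) / (p i) := by
    intro i
    have hpos : (0:ℚ) < (p i : ℚ) := by have := hp i; positivity
    set qi := m (Sum.inl i) / p i with hq
    have hsp : m (Sum.inl i) = p i * qi + a i := by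
      conv_lhs => rw [← Nat.div_add_mod (m (Sum.inl i)) (p i)]
      rw [hmod i]
    rw [hsp]
    push_cast
    field_simp
  rw [Finset.sum_congr rfl (fun i _ => hsplit i)] at hdeg
  rw [Finset.sum_add_distrib] at hdeg
  have key : ((∑ i : ι, (m (Sum.inl i) / p i : ℕ) : ℚ)) + (m (Sum.inr 0) + m (Sum.inr 1)) = aN := by
    push_cast
    push_cast at hdeg
    linarith [hdeg]
  have : (((∑ i : ι, m (Sum.inl i) / p i) + m (Sum.inr 0) + m (Sum.inr 1) : ℕ) : ℚ) = (aN : ℚ) := by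
    push_cast
    linarith [key]
  exact_mod_cast this

theorem wt_build (a : ι → ℕ) (aN : ℕ) (m : (ι ⊕ Fin 2) →₀ ℕ)
    (q : ι → ℕ) (hm : ∀ i, m (Sum.inl i) = a i + p i * q i)
    (hs : (∑ i : ι, q i) + m (Sum.inr 0) + m (Sum.inr 1) = aN) :
    wtA p m = (∑ i, a i • egen p i) + aN • cgen p := by
  have step : ∀ i : ι, m (Sum.inl i) • egen p i = a i • egen p i + q i • cgen p := by
    intro i
    rw [hm i, add_smul, mul_comm, mul_smul, pe_eq_c]
  rw [wtA, Finset.sum_congr rfl (fun i _ => step i), Finset.sum_add_distrib, ← hs]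
  simp only [add_smul, Finset.sum_smul]
  abel

variable (c0 c1 : ι → ℂ)

def ellp (i : ι) : SPoly ι := C (c0 i) * X (Sum.inr 0) + C (c1 i) * X (Sum.inr 1)

theorem monomial_mem_polyComp {y : LGroup ι p} {m : (ι ⊕ Fin 2) →₀ ℕ}
    (h : wtA p m = y) (c : ℂ) : monomial m c ∈ polyCompA p y := by
  intro m' hm'
  rw [coeff_monomial] at hm'
  by_cases he : m = m'
  · subst he; exact h
  · simp [he] at hm'

theorem polyComp_le_span (y : LGroup ι p) :
    polyCompA p y ≤ Submodule.span ℂ {f : SPoly ι | ∃ m, wtA p m = y ∧ f = monomial m 1} := by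
  intro f hf
  rw [MvPolynomial.as_sum f]
  refine Submodule.sum_mem _ (fun m hm => ?_)
  have : (monomial m) (coeff m f) = (coeff m f) • (monomial m 1) := by
    rw [MvPolynomial.smul_monomial, smul_eq_mul, mul_one]
  rw [this]
  exact Submodule.smul_mem _ _ (Submodule.subset_span
    ⟨m, hf m (MvPolynomial.mem_support_iff.1 hm), rfl⟩)

theorem polyComp_mul_le (y z : LGroup ι p) :
    polyCompA p y * polyCompA p z ≤ polyCompA p (y + z) := by
  refine Submodule.mul_le.2 (fun f hf g hg => ?_)
  intro m hm
  rw [MvPolynomial.coeff_mul] at hm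
  obtain ⟨x, hx, hne⟩ := Finset.exists_ne_zero_of_sum_ne_zero hm
  rw [Finset.HasAntidiagonal.mem_antidiagonal] at hx
  have h1 : coeff x.1 f ≠ 0 := fun h => hne (by rw [h, zero_mul])
  have h2 : coeff x.2 g ≠ 0 := fun h => hne (by rw [h, mul_zero])
  rw [← hx, wtA_add, hf _ h1, hg _ h2]

theorem sComp_mul_le (y z : LGroup ι p) :
    SCompA p c0 c1 y * SCompA p c0 c1 z ≤ SCompA p c0 c1 (y + z) := by
  rw [SCompA, SCompA, SCompA, ← Submodule.map_mul]
  exact Submodule.map_mono (polyComp_mul_le p y z)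

theorem mk_X_pow_eq (i : ι) :
    Ideal.Quotient.mk (SIdl ι p c0 c1) (X (Sum.inl i) ^ p i) =
      Ideal.Quotient.mk (SIdl ι p c0 c1) (ellp c0 c1 i) := by
  rw [Ideal.Quotient.eq]
  exact Ideal.subset_span ⟨i, rfl⟩

-- evaluation killing the ideal
theorem eval_vanish_of_mem (hp : ∀ i, 2 ≤ p i) (F : SPoly ι) (hF : F ∈ SIdl ι p c0 c1)
    (s0 s1 : ℂ) (ξ : ι → ℂ) (hξ : ∀ i, ξ i ^ p i = c0 i * s0 + c1 i * s1) :
    aeval (Sum.elim ξ ![s0, s1]) F = 0 := by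
  have : SIdl ι p c0 c1 ≤ RingHom.ker (aeval (Sum.elim ξ ![s0, s1]) : SPoly ι →ₐ[ℂ] ℂ) := by
    rw [SIdl, Ideal.span_le]
    rintro f ⟨i, rfl⟩
    simp only [SetLike.mem_coe, RingHom.mem_ker, map_sub, map_add, map_mul, map_pow,
      aeval_X, aeval_C]
    simp only [Sum.elim_inl, Sum.elim_inr, Matrix.cons_val_zero, Matrix.cons_val_one,
      Matrix.head_cons, Algebra.algebraMap_self_apply]
    rw [hξ i, sub_self]
  exact this hF

theorem binom_indep (hp : ∀ i, 2 ≤ p i) (aN : ℕ) :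
    LinearIndependent ℂ (fun l : Fin (aN + 1) =>
      Ideal.Quotient.mk (SIdl ι p c0 c1)
        (X (Sum.inr 0) ^ (l : ℕ) * X (Sum.inr 1) ^ (aN - (l : ℕ)))) := by
  rw [Fintype.linearIndependent_iff]
  intro γ hγ l0
  set F : SPoly ι :=
    ∑ l : Fin (aN+1), γ l • (X (Sum.inr 0) ^ (l:ℕ) * X (Sum.inr 1) ^ (aN - (l:ℕ))) with hFdef
  have hF : F ∈ SIdl ι p c0 c1 := by
    have hmk : (Ideal.Quotient.mkₐ ℂ (SIdl ι p c0 c1)) F = 0 := by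
      rw [hFdef, map_sum]
      simp only [map_smul, Ideal.Quotient.mkₐ_eq_mk]
      exact hγ
    rwa [Ideal.Quotient.mkₐ_eq_mk, Ideal.Quotient.eq_zero_iff_mem] at hmk
  have hval : ∀ s0 s1 : ℂ, ∑ l : Fin (aN+1), γ l * (s0 ^ (l:ℕ) * s1 ^ (aN - (l:ℕ))) = 0 := by
    intro s0 s1
    have hroot : ∀ i, ∃ z : ℂ, z ^ p i = c0 i * s0 + c1 i * s1 := fun i =>
      IsAlgClosed.exists_pow_nat_eq _ (by have := hp i; omega)
    choose ξ hξ using hroot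
    have hev := eval_vanish_of_mem p c0 c1 hp F hF s0 s1 ξ hξ
    rw [hFdef, map_sum] at hev
    simpa [aeval_X, smul_eq_mul] using hev
  set P : Polynomial ℂ := ∑ l : Fin (aN+1), Polynomial.monomial (l:ℕ) (γ l) with hPdef
  have hP0 : P = 0 := by
    apply Polynomial.zero_of_eval_zero
    intro s
    have := hval s 1
    simp only [one_pow, mul_one] at this
    rw [hPdef, Polynomial.eval_finset_sum]
    simpa [Polynomial.eval_monomial] using this
  have hcoeff : P.coeff (l0:ℕ) = γ l0 := by
    rw [hPdef, Polynomial.finset_sum_coeff, Finset.sum_eq_single l0]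
    · simp [Polynomial.coeff_monomial]
    · intro b _ hb
      rw [Polynomial.coeff_monomial]
      exact if_neg (fun h => hb (Fin.ext h))
    · intro h; exact absurd (Finset.mem_univ l0) h
  rw [← hcoeff, hP0, Polynomial.coeff_zero]

def Hspan (d : ℕ) : Submodule ℂ (SPoly ι) :=
  Submodule.span ℂ (Set.range fun l : Fin (d+1) =>
    (X (Sum.inr 0) : SPoly ι) ^ (l:ℕ) * X (Sum.inr 1) ^ (d - (l:ℕ)))

theorem gen_mem_Hspan {d l0 k : ℕ} (h : l0 + k = d) :
    (X (Sum.inr 0) : SPoly ι) ^ l0 * X (Sum.inr 1) ^ k ∈ Hspan (ι := ι) d := by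
  have hl : l0 < d + 1 := by omega
  have hk : k = d - l0 := by omega
  subst hk
  exact Submodule.subset_span ⟨⟨l0, hl⟩, rfl⟩

theorem Hspan_mul_le (d1 d2 : ℕ) :
    Hspan (ι := ι) d1 * Hspan (ι := ι) d2 ≤ Hspan (ι := ι) (d1 + d2) := by
  rw [Hspan, Hspan, Submodule.span_mul_span]
  rw [Submodule.span_le]
  rintro w hw
  rw [Set.mem_mul] at hw
  obtain ⟨u, hu, v, hv, rfl⟩ := hw
  obtain ⟨l1, rfl⟩ := hu
  obtain ⟨l2, rfl⟩ := hv
  have heq : (X (Sum.inr 0) : SPoly ι) ^ (l1:ℕ) * X (Sum.inr 1) ^ (d1 - (l1:ℕ)) *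
      ((X (Sum.inr 0) : SPoly ι) ^ (l2:ℕ) * X (Sum.inr 1) ^ (d2 - (l2:ℕ))) =
      (X (Sum.inr 0) : SPoly ι) ^ ((l1:ℕ) + (l2:ℕ)) *
        X (Sum.inr 1) ^ ((d1 - (l1:ℕ)) + (d2 - (l2:ℕ))) := by
    rw [pow_add, pow_add]; ring
  rw [heq]
  have h1 : (l1:ℕ) ≤ d1 := by omega
  have h2 : (l2:ℕ) ≤ d2 := by omega
  exact gen_mem_Hspan (by omega)

theorem one_mem_Hspan : (1 : SPoly ι) ∈ Hspan (ι := ι) 0 := by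
  have := gen_mem_Hspan (ι := ι) (l0 := 0) (k := 0) rfl
  simpa using this

theorem mul_mem_Hspan {d1 d2 : ℕ} {u v : SPoly ι} (hu : u ∈ Hspan (ι := ι) d1)
    (hv : v ∈ Hspan (ι := ι) d2) : u * v ∈ Hspan (ι := ι) (d1 + d2) :=
  Hspan_mul_le d1 d2 (Submodule.mul_mem_mul hu hv)

theorem pow_mem_Hspan {d : ℕ} {u : SPoly ι} (hu : u ∈ Hspan (ι := ι) d) (k : ℕ) :
    u ^ k ∈ Hspan (ι := ι) (k * d) := by
  induction k with
  | zero => simpa using one_mem_Hspan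
  | succ k ih =>
      have := mul_mem_Hspan ih hu
      rw [pow_succ]
      convert this using 2
      ring

theorem prod_mem_Hspan (s : Finset ι) (g : ι → SPoly ι) (w : ι → ℕ)
    (h : ∀ i ∈ s, g i ∈ Hspan (ι := ι) (w i)) :
    (∏ i ∈ s, g i) ∈ Hspan (ι := ι) (∑ i ∈ s, w i) := by
  classical
  induction s using Finset.cons_induction with
  | empty => simpa using one_mem_Hspan
  | cons j s hj ih =>
      rw [Finset.prod_cons, Finset.sum_cons]
      exact mul_mem_Hspan (h j (Finset.mem_cons_self j s))
        (ih (fun i hi => h i (Finset.mem_cons_of_mem hi)))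

theorem ellp_mem_Hspan (i : ι) : ellp c0 c1 i ∈ Hspan (ι := ι) 1 := by
  have h0 : (X (Sum.inr 0) : SPoly ι) ^ 1 * X (Sum.inr 1) ^ 0 ∈ Hspan (ι := ι) 1 :=
    gen_mem_Hspan rfl
  have h1 : (X (Sum.inr 0) : SPoly ι) ^ 0 * X (Sum.inr 1) ^ 1 ∈ Hspan (ι := ι) 1 :=
    gen_mem_Hspan rfl
  have : ellp c0 c1 i = c0 i • ((X (Sum.inr 0) : SPoly ι) ^ 1 * X (Sum.inr 1) ^ 0)
      + c1 i • ((X (Sum.inr 0) : SPoly ι) ^ 0 * X (Sum.inr 1) ^ 1) := by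
    simp [ellp, MvPolynomial.smul_eq_C_mul]
  rw [this]
  exact Submodule.add_mem _ (Submodule.smul_mem _ _ h0) (Submodule.smul_mem _ _ h1)

theorem prod_X_pow_eq_monomial' (s : Finset (ι ⊕ Fin 2)) (f : (ι ⊕ Fin 2) → ℕ) :
    (∏ j ∈ s, (X j : SPoly ι) ^ (f j)) =
      monomial (∑ j ∈ s, Finsupp.single j (f j)) 1 := by
  classical
  induction s using Finset.cons_induction with
  | empty => simp
  | cons j s hj ih =>
      rw [Finset.prod_cons, Finset.sum_cons, ih, MvPolynomial.X_pow_eq_monomial,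
        MvPolynomial.monomial_mul, one_mul]

theorem sum_single_eq (m : (ι ⊕ Fin 2) →₀ ℕ) :
    ∑ j : ι ⊕ Fin 2, Finsupp.single j (m j) = m := by
  ext j
  rw [Finsupp.finset_sum_apply, Finset.sum_eq_single j]
  · simp
  · intro b _ hb; exact Finsupp.single_eq_of_ne' hb
  · intro h; exact absurd (Finset.mem_univ j) h

theorem monomial_eq_prod (m : (ι ⊕ Fin 2) →₀ ℕ) :
    (monomial m 1 : SPoly ι) = (∏ i : ι, X (Sum.inl i) ^ m (Sum.inl i)) *
      (X (Sum.inr 0) ^ m (Sum.inr 0) * X (Sum.inr 1) ^ m (Sum.inr 1)) := by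
  have := prod_X_pow_eq_monomial' (ι := ι) Finset.univ m
  rw [sum_single_eq] at this
  rw [← this, Fintype.prod_sum_type]
  congr 1
  rw [Fin.prod_univ_two]

theorem X_pow_mul_X_pow_eq_monomial (l k : ℕ) :
    (X (Sum.inr 0) : SPoly ι) ^ l * X (Sum.inr 1) ^ k =
      monomial (Finsupp.single (Sum.inr 0) l + Finsupp.single (Sum.inr 1) k) 1 := by
  rw [MvPolynomial.X_pow_eq_monomial, MvPolynomial.X_pow_eq_monomial,
    MvPolynomial.monomial_mul, one_mul]

theorem wt_t_monomial (l k : ℕ) :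
    wtA p (Finsupp.single (Sum.inr (0 : Fin 2)) l + Finsupp.single (Sum.inr 1) k) =
      (l + k) • cgen p := by
  have h0 : ∀ i : ι, ((Finsupp.single (Sum.inr (0:Fin 2)) l +
      Finsupp.single (Sum.inr (1:Fin 2)) k : (ι ⊕ Fin 2) →₀ ℕ)) (Sum.inl i) = 0 := by
    intro i; simp [Finsupp.add_apply, Finsupp.single_apply]
  have h1 : ((Finsupp.single (Sum.inr (0:Fin 2)) l +
      Finsupp.single (Sum.inr (1:Fin 2)) k : (ι ⊕ Fin 2) →₀ ℕ)) (Sum.inr 0) = l := by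
    simp [Finsupp.add_apply, Finsupp.single_apply]
  have h2 : ((Finsupp.single (Sum.inr (0:Fin 2)) l +
      Finsupp.single (Sum.inr (1:Fin 2)) k : (ι ⊕ Fin 2) →₀ ℕ)) (Sum.inr 1) = k := by
    simp [Finsupp.add_apply, Finsupp.single_apply]
  rw [wtA]
  simp only [h0, h1, h2, zero_smul, zero_nsmul, Finset.sum_const_zero, zero_add]

theorem mem_SComp_of_mem {y : LGroup ι p} {g : SPoly ι} (hg : g ∈ polyCompA p y) :
    Ideal.Quotient.mk (SIdl ι p c0 c1) g ∈ SCompA p c0 c1 y := by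
  rw [SCompA, Submodule.mem_map]
  exact ⟨g, hg, by simp⟩

theorem mk_monomial_mem_c (hp : ∀ i, 2 ≤ p i) (aN : ℕ) (m : (ι ⊕ Fin 2) →₀ ℕ)
    (h : wtA p m = aN • cgen p) :
    Ideal.Quotient.mk (SIdl ι p c0 c1) (monomial m 1) ∈
      Submodule.span ℂ (Set.range fun l : Fin (aN+1) =>
        Ideal.Quotient.mk (SIdl ι p c0 c1)
          (X (Sum.inr 0) ^ (l:ℕ) * X (Sum.inr 1) ^ (aN - (l:ℕ)))) := by
  obtain ⟨hmod, hsum⟩ := wt_classify p hp (fun _ => 0) (fun i => Nat.lt_of_lt_of_le Nat.zero_lt_two (hp i))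
    aN m (by rw [h]; simp [zero_nsmul])
  set q : ι → ℕ := fun i => m (Sum.inl i) / p i with hq
  have hsplit : ∀ i, m (Sum.inl i) = p i * q i := fun i => by
    conv_lhs => rw [← Nat.div_add_mod (m (Sum.inl i)) (p i)]
    rw [hmod i, add_zero]
  set g : SPoly ι := (∏ i : ι, ellp c0 c1 i ^ q i) *
    (X (Sum.inr 0) ^ m (Sum.inr 0) * X (Sum.inr 1) ^ m (Sum.inr 1)) with hgdef
  have hQ : Ideal.Quotient.mk (SIdl ι p c0 c1) (monomial m 1) =
      Ideal.Quotient.mk (SIdl ι p c0 c1) g := by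
    rw [monomial_eq_prod, hgdef]
    simp only [map_mul, map_prod]
    congr 1
    refine Finset.prod_congr rfl (fun i _ => ?_)
    rw [hsplit i, pow_mul, map_pow, mk_X_pow_eq, ← map_pow]
  have hgH : g ∈ Hspan (ι := ι) aN := by
    have h1 : (∏ i : ι, ellp c0 c1 i ^ q i) ∈ Hspan (ι := ι) (∑ i : ι, q i) := by
      have := prod_mem_Hspan Finset.univ (fun i => ellp c0 c1 i ^ q i) q
        (fun i _ => by simpa [mul_one] using pow_mem_Hspan (ellp_mem_Hspan c0 c1 i) (q i))
      exact this
    have h2 : (X (Sum.inr 0) : SPoly ι) ^ m (Sum.inr 0) * X (Sum.inr 1) ^ m (Sum.inr 1) ∈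
        Hspan (ι := ι) (m (Sum.inr 0) + m (Sum.inr 1)) := gen_mem_Hspan rfl
    have := mul_mem_Hspan h1 h2
    rwa [← add_assoc, hsum] at this
  rw [hQ]
  have hmap : Ideal.Quotient.mk (SIdl ι p c0 c1) g ∈
      Submodule.map (Ideal.Quotient.mkₐ ℂ (SIdl ι p c0 c1)).toLinearMap
        (Hspan (ι := ι) aN) := by
    rw [Submodule.mem_map]
    exact ⟨g, hgH, by simp⟩
  rw [Hspan, Submodule.map_span, ← Set.range_comp] at hmap
  simpa [Function.comp_def, Ideal.Quotient.mkₐ_eq_mk] using hmap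

theorem sComp_c_eq_span (hp : ∀ i, 2 ≤ p i) (aN : ℕ) :
    SCompA p c0 c1 (aN • cgen p) =
      Submodule.span ℂ (Set.range fun l : Fin (aN+1) =>
        Ideal.Quotient.mk (SIdl ι p c0 c1)
          (X (Sum.inr 0) ^ (l:ℕ) * X (Sum.inr 1) ^ (aN - (l:ℕ)))) := by
  apply le_antisymm
  · rw [SCompA]
    have h1 := Submodule.map_mono (f := (Ideal.Quotient.mkₐ ℂ (SIdl ι p c0 c1)).toLinearMap)
      (polyComp_le_span p (aN • cgen p))
    refine le_trans h1 ?_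
    rw [Submodule.map_span, Submodule.span_le]
    rintro w ⟨f, ⟨m, hm, rfl⟩, rfl⟩
    have := mk_monomial_mem_c p c0 c1 hp aN m hm
    simpa using this
  · rw [Submodule.span_le]
    rintro w ⟨l, rfl⟩
    have hwt : wtA p (Finsupp.single (Sum.inr (0:Fin 2)) (l:ℕ) +
        Finsupp.single (Sum.inr 1) (aN - (l:ℕ))) = aN • cgen p := by
      rw [wt_t_monomial]
      congr 1
      omega
    have := mem_SComp_of_mem p c0 c1 (monomial_mem_polyComp p hwt 1)
    rw [← X_pow_mul_X_pow_eq_monomial] at this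
    exact this

theorem sum_single_inl_apply (c : ι → ℕ) (j : ι) :
    ((∑ i : ι, Finsupp.single (Sum.inl i) (c i) : (ι ⊕ Fin 2) →₀ ℕ)) (Sum.inl j) = c j := by
  rw [Finsupp.finset_sum_apply, Finset.sum_eq_single j]
  · simp
  · intro b _ hb
    rw [Finsupp.single_apply, if_neg (fun h => hb (Sum.inl_injective h))]
  · intro h; exact absurd (Finset.mem_univ j) h

theorem sum_single_inl_apply_inr (c : ι → ℕ) (b : Fin 2) :
    ((∑ i : ι, Finsupp.single (Sum.inl i) (c i) : (ι ⊕ Fin 2) →₀ ℕ)) (Sum.inr b) = 0 := by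
  rw [Finsupp.finset_sum_apply]
  refine Finset.sum_eq_zero (fun i _ => ?_)
  rw [Finsupp.single_apply, if_neg Sum.inl_ne_inr]

theorem prod_X_inl_eq_monomial (a : ι → ℕ) :
    (∏ i : ι, (X (Sum.inl i) : SPoly ι) ^ a i) =
      monomial (∑ i : ι, Finsupp.single (Sum.inl i) (a i)) 1 := by
  classical
  induction (Finset.univ : Finset ι) using Finset.cons_induction with
  | empty => simp
  | cons j s hj ih =>
      rw [Finset.prod_cons, Finset.sum_cons, ih, MvPolynomial.X_pow_eq_monomial,
        MvPolynomial.monomial_mul, one_mul]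

theorem wt_m0 (a : ι → ℕ) :
    wtA p (∑ i : ι, Finsupp.single (Sum.inl i) (a i)) = ∑ i : ι, a i • egen p i := by
  rw [wtA]
  simp only [sum_single_inl_apply, sum_single_inl_apply_inr, add_zero, zero_nsmul, zero_smul]

theorem sComp_factor (hp : ∀ i, 2 ≤ p i) (a : ι → ℕ) (ha : ∀ i, a i < p i) (aN : ℕ) :
    SCompA p c0 c1 ((∑ i, a i • egen p i) + aN • cgen p) =
      (SCompA p c0 c1 (aN • cgen p)).map
        (LinearMap.mulLeft ℂ (Ideal.Quotient.mk (SIdl ι p c0 c1)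
          (∏ i : ι, X (Sum.inl i) ^ a i))) := by
  classical
  set x : LGroup ι p := (∑ i, a i • egen p i) + aN • cgen p with hx
  set m₀ : (ι ⊕ Fin 2) →₀ ℕ := ∑ i : ι, Finsupp.single (Sum.inl i) (a i) with hm₀
  have hMp : (∏ i : ι, (X (Sum.inl i) : SPoly ι) ^ a i) = monomial m₀ 1 :=
    prod_X_inl_eq_monomial a
  apply le_antisymm
  · rw [SCompA]
    refine le_trans (Submodule.map_mono
      (f := (Ideal.Quotient.mkₐ ℂ (SIdl ι p c0 c1)).toLinearMap) (polyComp_le_span p x)) ?_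
    rw [Submodule.map_span, Submodule.span_le]
    rintro w ⟨f, ⟨m, hm, rfl⟩, rfl⟩
    obtain ⟨hmod, hsum⟩ := wt_classify p hp a ha aN m hm
    set q : ι → ℕ := fun i => m (Sum.inl i) / p i with hq
    have hsplit : ∀ i, m (Sum.inl i) = a i + p i * q i := fun i => by
      conv_lhs => rw [← Nat.div_add_mod (m (Sum.inl i)) (p i)]
      rw [hmod i]; ring
    set m' : (ι ⊕ Fin 2) →₀ ℕ := (∑ i : ι, Finsupp.single (Sum.inl i) (p i * q i)) +
      Finsupp.single (Sum.inr 0) (m (Sum.inr 0)) +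
      Finsupp.single (Sum.inr 1) (m (Sum.inr 1)) with hm'
    have hm'inl : ∀ i, m' (Sum.inl i) = p i * q i := by
      intro i
      rw [hm']
      simp only [Finsupp.add_apply, sum_single_inl_apply]
      rw [Finsupp.single_apply, Finsupp.single_apply, if_neg Sum.inr_ne_inl,
        if_neg Sum.inr_ne_inl, add_zero, add_zero]
    have hm'inr : ∀ b : Fin 2, m' (Sum.inr b) = m (Sum.inr b) := by
      intro b
      rw [hm']
      simp only [Finsupp.add_apply, sum_single_inl_apply_inr, zero_add]
      fin_cases b <;> simp [Finsupp.single_apply, Fin.ext_iff]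
    have hmm : m = m₀ + m' := by
      ext j
      rw [Finsupp.add_apply]
      match j with
      | Sum.inl i =>
          rw [hm'inl i, hm₀, sum_single_inl_apply, hsplit i]
      | Sum.inr b =>
          rw [hm'inr b, hm₀, sum_single_inl_apply_inr, zero_add]
    have hwt' : wtA p m' = aN • cgen p := by
      have := wt_build p (fun _ => 0) aN m' q
        (fun i => by rw [hm'inl i, zero_add])
        (by rw [hm'inr 0, hm'inr 1]; exact hsum)
      rwa [Finset.sum_congr rfl (fun i _ => zero_nsmul (egen p i)), Finset.sum_const_zero,
        zero_add] at this
    have hfac : (monomial m 1 : SPoly ι) = monomial m₀ 1 * monomial m' 1 := by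
      rw [MvPolynomial.monomial_mul, one_mul, hmm]
    have hz : Ideal.Quotient.mk (SIdl ι p c0 c1) (monomial m' 1) ∈
        SCompA p c0 c1 (aN • cgen p) :=
      mem_SComp_of_mem p c0 c1 (monomial_mem_polyComp p hwt' 1)
    refine ⟨Ideal.Quotient.mk (SIdl ι p c0 c1) (monomial m' 1), hz, ?_⟩
    rw [LinearMap.mulLeft_apply, hMp]
    simp only [AlgHom.toLinearMap_apply, Ideal.Quotient.mkₐ_eq_mk]
    rw [hfac, map_mul]
  · rw [Submodule.map_le_iff_le_comap]
    intro z hz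
    rw [SCompA, Submodule.mem_map] at hz
    obtain ⟨g, hg, rfl⟩ := hz
    simp only [Submodule.mem_comap, LinearMap.mulLeft_apply, AlgHom.toLinearMap_apply,
      Ideal.Quotient.mkₐ_eq_mk]
    rw [← map_mul]
    refine mem_SComp_of_mem p c0 c1 ?_
    have hMpw : (∏ i : ι, (X (Sum.inl i) : SPoly ι) ^ a i) ∈
        polyCompA p (∑ i, a i • egen p i) := by
      rw [hMp]
      exact monomial_mem_polyComp p (wt_m0 p a) 1
    exact polyComp_mul_le p _ _ (Submodule.mul_mem_mul hMpw hg)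

theorem gen_mem_sComp (l k : ℕ) :
    Ideal.Quotient.mk (SIdl ι p c0 c1) ((X (Sum.inr 0) : SPoly ι) ^ l * X (Sum.inr 1) ^ k) ∈
      SCompA p c0 c1 ((l + k) • cgen p) := by
  rw [X_pow_mul_X_pow_eq_monomial]
  exact mem_SComp_of_mem p c0 c1 (monomial_mem_polyComp p (wt_t_monomial p l k) 1)

theorem sComp_add_c (hp : ∀ i, 2 ≤ p i) (a : ι → ℕ) (ha : ∀ i, a i < p i) (aN m : ℕ) :
    SCompA p c0 c1 (((∑ i, a i • egen p i) + aN • cgen p) + m • cgen p) =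
      SCompA p c0 c1 ((∑ i, a i • egen p i) + aN • cgen p) *
        SCompA p c0 c1 (m • cgen p) := by
  have hx2 : ((∑ i, a i • egen p i) + aN • cgen p) + m • cgen p =
      (∑ i, a i • egen p i) + (aN + m) • cgen p := by
    rw [add_assoc, ← add_nsmul]
  apply le_antisymm
  · rw [hx2, sComp_factor p c0 c1 hp a ha (aN + m), sComp_c_eq_span p c0 c1 hp (aN + m),
      Submodule.map_span, Submodule.span_le]
    rintro w ⟨f, ⟨l, rfl⟩, rfl⟩
    set l1 : ℕ := min (l : ℕ) aN with hl1
    set l2 : ℕ := (l : ℕ) - l1 with hl2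
    have hll : (l : ℕ) < aN + m + 1 := l.isLt
    have h1 : l1 + l2 = (l : ℕ) := by omega
    have h2 : (aN - l1) + (m - l2) = aN + m - (l : ℕ) := by omega
    have hkey : (X (Sum.inr 0) : SPoly ι) ^ (l : ℕ) * X (Sum.inr 1) ^ (aN + m - (l : ℕ)) =
        ((X (Sum.inr 0) : SPoly ι) ^ l1 * X (Sum.inr 1) ^ (aN - l1)) *
          ((X (Sum.inr 0) : SPoly ι) ^ l2 * X (Sum.inr 1) ^ (m - l2)) := by
      rw [show aN + m - (l:ℕ) = (aN - l1) + (m - l2) from h2.symm, ← h1, pow_add, pow_add]; ring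
    simp only [LinearMap.mulLeft_apply]
    rw [hkey, map_mul, ← mul_assoc]
    have hu : Ideal.Quotient.mk (SIdl ι p c0 c1)
          ((X (Sum.inr 0) : SPoly ι) ^ l1 * X (Sum.inr 1) ^ (aN - l1)) ∈
        SCompA p c0 c1 (aN • cgen p) := by
      have := gen_mem_sComp p c0 c1 l1 (aN - l1)
      rwa [show l1 + (aN - l1) = aN by omega] at this
    have hv : Ideal.Quotient.mk (SIdl ι p c0 c1)
          ((X (Sum.inr 0) : SPoly ι) ^ l2 * X (Sum.inr 1) ^ (m - l2)) ∈
        SCompA p c0 c1 (m • cgen p) := by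
      have := gen_mem_sComp p c0 c1 l2 (m - l2)
      rwa [show l2 + (m - l2) = m by omega] at this
    refine Submodule.mul_mem_mul ?_ hv
    rw [sComp_factor p c0 c1 hp a ha aN]
    exact ⟨_, hu, by rw [LinearMap.mulLeft_apply]⟩
  · exact sComp_mul_le p c0 c1 _ _

end Dev

/-- Let `x = ∑ aᵢeᵢ + a·c` be in normal form with `a ≥ 0`. Then
`S_x = (∏ xᵢ^{aᵢ})·S_{ac}`, `S_{x+mc} = S_x·S_{mc}` for `m ≥ 0`, and `S_{ac}` is an
`(a+1)`-dimensional `ℂ`-vector space with basis the images of `t₀^ℓ t₁^{a−ℓ}`. -/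
theorem component_normal_form_structure (n : ℕ) (hn : 1 ≤ n) (p : Fin n → ℕ)
    (hp : ∀ i, 2 ≤ p i)
    (c0 c1 : Fin n → ℂ) (hnz : ∀ i, (c0 i, c1 i) ≠ (0, 0))
    (hdist : ∀ i j : Fin n, i ≠ j → c0 i * c1 j ≠ c1 i * c0 j)
    (a : Fin n → ℕ) (ha : ∀ i, a i < p i) (aN : ℕ)
    (x : LGroup (Fin n) p)
    (hxnf : x = (∑ i, a i • egen p i) + aN • cgen p) :
    SCompA p c0 c1 x =
        (SCompA p c0 c1 (aN • cgen p)).map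
          (LinearMap.mulLeft ℂ
            (Ideal.Quotient.mk (SIdl (Fin n) p c0 c1)
              (∏ i : Fin n, X (Sum.inl i) ^ a i))) ∧
      (∀ m : ℕ,
        SCompA p c0 c1 (x + m • cgen p) =
          SCompA p c0 c1 x * SCompA p c0 c1 (m • cgen p)) ∧
      Module.finrank ℂ ↥(SCompA p c0 c1 (aN • cgen p)) = aN + 1 ∧
      LinearIndependent ℂ (fun l : Fin (aN + 1) =>
        Ideal.Quotient.mk (SIdl (Fin n) p c0 c1)
          (X (Sum.inr 0) ^ (l : ℕ) * X (Sum.inr 1) ^ (aN - (l : ℕ)))) ∧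
      Submodule.span ℂ (Set.range (fun l : Fin (aN + 1) =>
          Ideal.Quotient.mk (SIdl (Fin n) p c0 c1)
            (X (Sum.inr 0) ^ (l : ℕ) * X (Sum.inr 1) ^ (aN - (l : ℕ))))) =
        SCompA p c0 c1 (aN • cgen p) := by
  subst hxnf
  refine ⟨sComp_factor p c0 c1 hp a ha aN,
    fun m => sComp_add_c p c0 c1 hp a ha aN m, ?_,
    binom_indep p c0 c1 hp aN,
    (sComp_c_eq_span p c0 c1 hp aN).symm⟩
  rw [sComp_c_eq_span p c0 c1 hp aN, finrank_span_eq_card (binom_indep p c0 c1 hp aN)]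
  simp
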